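/- In G = ℤ² ⋊ ℤ/2ℤ (swap action), for every n ≥ 1 the non-geodesic word w = t aⁿ t aⁿ t has a unique strictly shorter representative word that is geodesic, namely u = aⁿ t aⁿ, and every other word over A = {a, a⁻¹, t, t⁻¹} representing the same element ((n,n),1) has length at least 2n + 3 = |w|. -/

import Mathlib

/-- The coordinate-swapping automorphism of ℤ². -/
def swapAut : MulAut (Multiplicative (ℤ × ℤ)) :=
  AddEquiv.toMultiplicative (AddEquiv.prodComm : (ℤ × ℤ) ≃+ (ℤ × ℤ))

lemma swapAut_sq : swapAut ^ 2 = 1 := by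
  refine MulEquiv.ext fun z => ?_
  show swapAut (swapAut z) = z
  cases z
  rfl

/-- The action of ℤ/2ℤ on ℤ² by swapping the two coordinates. -/
def swapAction : Multiplicative (ZMod 2) →* MulAut (Multiplicative (ℤ × ℤ)) where
  toFun ε := swapAut ^ (Multiplicative.toAdd ε).val
  map_one' := rfl
  map_mul' x y := by
    show swapAut ^ _ = swapAut ^ _ * swapAut ^ _
    rw [← pow_add]
    have key : ∀ m n : ℕ, m % 2 = n % 2 → swapAut ^ m = swapAut ^ n := by
      intro m n h
      rw [← Nat.div_add_mod m 2, ← Nat.div_add_mod n 2, h, pow_add, pow_add,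
        pow_mul, pow_mul, swapAut_sq]
      simp
    apply key
    have := ZMod.val_add (Multiplicative.toAdd x) (Multiplicative.toAdd y)
    simp only [toAdd_mul] at *
    omega

/-- The group G = ℤ² ⋊ ℤ/2ℤ with the swap action. -/
abbrev GG := SemidirectProduct (Multiplicative (ℤ × ℤ)) (Multiplicative (ZMod 2)) swapAction

/-- The generator a = ((1,0), 0). -/
def ga : GG := SemidirectProduct.inl (Multiplicative.ofAdd ((1, 0) : ℤ × ℤ))

/-- The generator t = ((0,0), 1). -/
def gt : GG := SemidirectProduct.inr (Multiplicative.ofAdd (1 : ZMod 2))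

/-- The element ((x,y), ε) of G. -/
def el (x y : ℤ) (ε : ZMod 2) : GG :=
  ⟨Multiplicative.ofAdd (x, y), Multiplicative.ofAdd ε⟩

/-- The generating set A = {a, a⁻¹, t, t⁻¹}. -/
def GenSet : Set GG := {ga, ga⁻¹, gt, gt⁻¹}

/-- `w` is a word over the alphabet A. -/
def IsWord (w : List GG) : Prop := ∀ x ∈ w, x ∈ GenSet

/-- `w` is a word over A representing the group element `g` (via its product). -/
def Represents (w : List GG) (g : GG) : Prop := IsWord w ∧ w.prod = g

/-- The word length of `g`: minimal length of a word over A representing `g`. -/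
noncomputable def wordLength (g : GG) : ℕ :=
  sInf {n | ∃ w : List GG, Represents w g ∧ w.length = n}

/-- A word over A is geodesic if no strictly shorter word over A represents
the same element. -/
def IsGeodesic (w : List GG) : Prop :=
  IsWord w ∧ ∀ v : List GG, IsWord v → v.prod = w.prod → w.length ≤ v.length

open Classical in
/-- The number of t-letters of a word (occurrences of t and t⁻¹). -/
noncomputable def tCount (w : List GG) : ℕ :=
  w.countP (fun x => decide (x = gt ∨ x = gt⁻¹))

/-- The word aˣ over A: x letters `a` if x ≥ 0, |x| letters `a⁻¹` if x < 0. -/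
def apow (x : ℤ) : List GG :=
  if 0 ≤ x then List.replicate x.toNat ga else List.replicate (-x).toNat ga⁻¹

/-- The word metric on G with respect to A. -/
noncomputable def dA (g h : GG) : ℕ := wordLength (g⁻¹ * h)

/-- The point of G reached at time i along the word w (the endpoint if i
exceeds the length of w). -/
def pt (w : List GG) (i : ℕ) : GG := (w.take i).prod

/-- Words u and w synchronously k-fellow travel. -/
def FellowTravels (k : ℕ) (u w : List GG) : Prop :=
  ∀ i : ℕ, dA (pt u i) (pt w i) ≤ k

/-! ### Auxiliary lemmas -/

lemma ga_eq : ga = el 1 0 0 := rfl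
lemma gt_eq : gt = el 0 0 1 := rfl

lemma swapAction_zero : swapAction (Multiplicative.ofAdd (0 : ZMod 2)) = 1 := by
  show swapAut ^ (0 : ZMod 2).val = 1
  rfl

lemma swapAction_one_apply (x y : ℤ) :
    swapAction (Multiplicative.ofAdd (1 : ZMod 2)) (Multiplicative.ofAdd (x, y)) =
      Multiplicative.ofAdd (y, x) := rfl

lemma el_zero_mul (x y x' y' : ℤ) (e' : ZMod 2) :
    el x y 0 * el x' y' e' = el (x + x') (y + y') e' := by
  ext : 1
  · show (Multiplicative.ofAdd (x,y) * swapAction (Multiplicative.ofAdd (0:ZMod 2)) (Multiplicative.ofAdd (x',y'))) = _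
    rw [swapAction_zero]
    rfl
  · show Multiplicative.ofAdd (0:ZMod 2) * Multiplicative.ofAdd e' = Multiplicative.ofAdd e'
    simp

lemma el_one_mul (x y x' y' : ℤ) (e' : ZMod 2) :
    el x y 1 * el x' y' e' = el (x + y') (y + x') (1 + e') := by
  ext : 1
  · show (Multiplicative.ofAdd (x,y) * swapAction (Multiplicative.ofAdd (1:ZMod 2)) (Multiplicative.ofAdd (x',y'))) = _
    rw [swapAction_one_apply]
    rfl
  · rfl

lemma gt_inv : gt⁻¹ = gt := by
  rw [eq_comm, eq_inv_iff_mul_eq_one]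
  show el 0 0 1 * el 0 0 1 = 1
  rw [el_one_mul]
  decide

lemma el_inj {x y x' y' : ℤ} {e e' : ZMod 2} (h : el x y e = el x' y' e') :
    x = x' ∧ y = y' ∧ e = e' := by
  simp only [el, SemidirectProduct.ext_iff, EmbeddingLike.apply_eq_iff_eq, Prod.mk.injEq] at h
  tauto

lemma gainv_eq : ga⁻¹ = el (-1) 0 0 := by
  apply inv_eq_of_mul_eq_one_right
  rw [ga_eq, el_zero_mul]
  decide

lemma ga_mul (x y : ℤ) (e : ZMod 2) : ga * el x y e = el (1 + x) y e := by
  rw [ga_eq, el_zero_mul, zero_add]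
lemma gainv_mul (x y : ℤ) (e : ZMod 2) : ga⁻¹ * el x y e = el (-1 + x) y e := by
  rw [gainv_eq, el_zero_mul, zero_add]
lemma gt_mul (x y : ℤ) (e : ZMod 2) : gt * el x y e = el y x (1 + e) := by
  rw [gt_eq, el_one_mul, zero_add, zero_add]

lemma ga_ne_gainv : ga ≠ ga⁻¹ := by
  intro h; rw [gainv_eq, ga_eq] at h; obtain ⟨h1, -, -⟩ := el_inj h; omega

lemma ga_ne_gt : ga ≠ gt := by
  intro h; rw [ga_eq, gt_eq] at h; obtain ⟨h1, -, -⟩ := el_inj h; omega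

lemma gainv_ne_gt : ga⁻¹ ≠ gt := by
  intro h; rw [gainv_eq, gt_eq] at h; obtain ⟨h1, -, -⟩ := el_inj h; omega

open Classical in
noncomputable def cntA (w : List GG) : ℕ := w.countP (fun x => decide (x = ga))
open Classical in
noncomputable def cntB (w : List GG) : ℕ := w.countP (fun x => decide (x = ga⁻¹))
open Classical in
noncomputable def cntT (w : List GG) : ℕ := w.countP (fun x => decide (x = gt))

lemma cntA_cons_ga (w : List GG) : cntA (ga :: w) = cntA w + 1 := by
  simp [cntA, List.countP_cons]
lemma cntA_cons_ne {a : GG} (h : a ≠ ga) (w : List GG) : cntA (a :: w) = cntA w := by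
  simp [cntA, List.countP_cons, h]
lemma cntB_cons_gainv (w : List GG) : cntB (ga⁻¹ :: w) = cntB w + 1 := by
  simp [cntB, List.countP_cons]
lemma cntB_cons_ne {a : GG} (h : a ≠ ga⁻¹) (w : List GG) : cntB (a :: w) = cntB w := by
  simp [cntB, List.countP_cons, h]
lemma cntT_cons_gt (w : List GG) : cntT (gt :: w) = cntT w + 1 := by
  simp [cntT, List.countP_cons]
lemma cntT_cons_ne {a : GG} (h : a ≠ gt) (w : List GG) : cntT (a :: w) = cntT w := by
  simp [cntT, List.countP_cons, h]

/-- The key structural lemma. -/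
lemma key (w : List GG) (hw : IsWord w) :
    ∃ x y : ℤ, w.prod = el x y (cntT w) ∧
      x + y = (cntA w : ℤ) - (cntB w : ℤ) ∧
      w.length = cntA w + cntB w + cntT w := by
  induction w with
  | nil =>
    refine ⟨0, 0, ?_, by simp [cntA, cntB], by simp [cntA, cntB, cntT]⟩
    show (1 : GG) = el 0 0 ((0 : ℕ) : ZMod 2)
    decide
  | cons a w ih =>
    have ha := hw a (by simp)
    have hw' : IsWord w := fun x hx => hw x (by simp [hx])
    obtain ⟨x, y, hp, hsum, hlen⟩ := ih hw'
    simp only [GenSet, Set.mem_insert_iff, Set.mem_singleton_iff, gt_inv] at ha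
    have hlc : (a :: w).length = w.length + 1 := rfl
    rcases ha with h | h | h | h
    · subst h
      refine ⟨1 + x, y, ?_, ?_, ?_⟩
      · rw [cntT_cons_ne ga_ne_gt, List.prod_cons, hp, ga_mul]
      · rw [cntA_cons_ga, cntB_cons_ne ga_ne_gainv]
        push_cast
        omega
      · rw [hlc, cntA_cons_ga, cntB_cons_ne ga_ne_gainv, cntT_cons_ne ga_ne_gt]
        omega
    · subst h
      refine ⟨-1 + x, y, ?_, ?_, ?_⟩
      · rw [cntT_cons_ne gainv_ne_gt, List.prod_cons, hp, gainv_mul]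
      · rw [cntA_cons_ne (Ne.symm ga_ne_gainv), cntB_cons_gainv]
        push_cast
        omega
      · rw [hlc, cntA_cons_ne (Ne.symm ga_ne_gainv), cntB_cons_gainv,
          cntT_cons_ne gainv_ne_gt]
        omega
    · subst h
      refine ⟨y, x, ?_, ?_, ?_⟩
      · rw [cntT_cons_gt, List.prod_cons, hp, gt_mul]
        congr 1
        push_cast
        ring
      · rw [cntA_cons_ne (Ne.symm ga_ne_gt), cntB_cons_ne (Ne.symm gainv_ne_gt)]
        omega
      · rw [hlc, cntA_cons_ne (Ne.symm ga_ne_gt), cntB_cons_ne (Ne.symm gainv_ne_gt),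
          cntT_cons_gt]
        omega
    · subst h
      refine ⟨y, x, ?_, ?_, ?_⟩
      · rw [cntT_cons_gt, List.prod_cons, hp, gt_mul]
        congr 1
        push_cast
        ring
      · rw [cntA_cons_ne (Ne.symm ga_ne_gt), cntB_cons_ne (Ne.symm gainv_ne_gt)]
        omega
      · rw [hlc, cntA_cons_ne (Ne.symm ga_ne_gt), cntB_cons_ne (Ne.symm gainv_ne_gt),
          cntT_cons_gt]
        omega

lemma only_ga (w : List GG) (h : ∀ x ∈ w, x = ga ∨ x = gt) (h0 : cntT w = 0) :
    w = List.replicate w.length ga := by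
  apply List.eq_replicate_of_mem
  intro b hb
  rcases h b hb with h' | h'
  · exact h'
  · exfalso
    subst h'
    have := List.countP_eq_zero.mp h0 gt hb
    simp at this

lemma shape (w : List GG) (h : ∀ x ∈ w, x = ga ∨ x = gt) (h1 : cntT w = 1) :
    ∃ j k : ℕ, w = List.replicate j ga ++ gt :: List.replicate k ga := by
  induction w with
  | nil => simp [cntT] at h1
  | cons a w ih =>
    rcases h a (by simp) with h' | h'
    · subst h'
      rw [cntT_cons_ne ga_ne_gt] at h1
      obtain ⟨j, k, hw⟩ := ih (fun x hx => h x (by simp [hx])) h1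
      exact ⟨j + 1, k, by rw [hw, List.replicate_succ]; rfl⟩
    · subst h'
      rw [cntT_cons_gt] at h1
      have h0 : cntT w = 0 := by omega
      refine ⟨0, w.length, ?_⟩
      conv_lhs => rw [only_ga w (fun x hx => h x (by simp [hx])) h0]
      simp

lemma prod_replicate_ga (m : ℕ) : (List.replicate m ga).prod = el m 0 0 := by
  induction m with
  | zero =>
    show (1 : GG) = el ((0 : ℕ) : ℤ) 0 0
    decide
  | succ m ih =>
    rw [List.replicate_succ, List.prod_cons, ih, ga_eq, el_zero_mul]
    congr 1
    push_cast
    ring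

lemma prod_mid (j k : ℕ) :
    (List.replicate j ga ++ gt :: List.replicate k ga).prod = el j k 1 := by
  rw [List.prod_append, List.prod_cons, prod_replicate_ga, prod_replicate_ga,
    gt_eq, el_one_mul, el_zero_mul]
  congr 1 <;> push_cast <;> first | ring | decide

lemma apow_natCast (m : ℕ) : apow m = List.replicate m ga := by
  simp [apow]

lemma u_eq (m : ℕ) :
    apow m ++ [gt] ++ apow m = List.replicate m ga ++ gt :: List.replicate m ga := by
  rw [apow_natCast]
  simp

lemma prod_u (m : ℕ) : (apow m ++ [gt] ++ apow m).prod = el m m 1 := by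
  rw [u_eq, prod_mid]

lemma prod_w (m : ℕ) :
    ([gt] ++ apow m ++ [gt] ++ apow m ++ [gt]).prod = el m m 1 := by
  rw [apow_natCast]
  simp only [List.prod_append, List.prod_singleton, prod_replicate_ga]
  have h1 : gt * el m 0 0 = el 0 m 1 := by rw [gt_mul]; norm_num
  have h2 : el 0 m 1 * gt = el 0 m 0 := by
    rw [gt_eq, el_one_mul]
    congr 1 <;> first | ring | decide
  have h3 : el 0 m 0 * el m 0 0 = el m m 0 := by rw [el_zero_mul]; norm_num
  have h4 : el m m 0 * gt = el m m 1 := by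
    rw [gt_eq, el_zero_mul]
    congr 1 <;> first | ring | decide
  rw [h1, h2, h3, h4]

lemma ga_mem : ga ∈ GenSet := by simp [GenSet]
lemma gt_mem : gt ∈ GenSet := by simp [GenSet]

lemma isWord_u (m : ℕ) : IsWord (apow m ++ [gt] ++ apow m) := by
  rw [u_eq]
  intro x hx
  simp at hx
  have : x = ga ∨ x = gt := by tauto
  rcases this with h | h <;> subst h
  · exact ga_mem
  · exact gt_mem

lemma isWord_w (m : ℕ) : IsWord ([gt] ++ apow m ++ [gt] ++ apow m ++ [gt]) := by
  rw [apow_natCast]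
  intro x hx
  simp at hx
  have : x = ga ∨ x = gt := by tauto
  rcases this with h | h <;> subst h
  · exact ga_mem
  · exact gt_mem

lemma odd_of_cast {c : ℕ} (h : (c : ZMod 2) = 1) : c % 2 = 1 := by
  have h2 : ((c % 2 : ℕ) : ZMod 2) = 1 := by rwa [ZMod.natCast_mod]
  rcases Nat.mod_two_eq_zero_or_one c with h' | h'
  · rw [h'] at h2
    exact absurd h2 (by decide)
  · exact h'

lemma len_u (m : ℕ) : (apow m ++ [gt] ++ apow m).length = 2 * m + 1 := by
  rw [u_eq]
  simp
  omega

lemma len_w (m : ℕ) : ([gt] ++ apow m ++ [gt] ++ apow m ++ [gt]).length = 2 * m + 3 := by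
  rw [apow_natCast]
  simp
  omega

/-- Every word representing `el n n 1` other than `u` has length ≥ 2n+3. -/
lemma main_bound (n : ℕ) (v : List GG) (hv : Represents v (el n n 1))
    (hne : v ≠ apow n ++ [gt] ++ apow n) : 2 * n + 3 ≤ v.length := by
  obtain ⟨hw, hprod⟩ := hv
  obtain ⟨x, y, hp, hsum, hlen⟩ := key v hw
  rw [hprod] at hp
  obtain ⟨hx, hy, he⟩ := el_inj hp.symm
  subst hx; subst hy
  have hmod : cntT v % 2 = 1 := odd_of_cast he
  have hpm : (cntA v : ℤ) - (cntB v : ℤ) = 2 * n := by omega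
  by_contra hlt
  push_neg at hlt
  -- then cntB v = 0 and cntT v = 1, length = 2n+1
  have hB : cntB v = 0 := by omega
  have hT : cntT v = 1 := by omega
  -- every letter is ga or gt
  have hform : ∀ x ∈ v, x = ga ∨ x = gt := by
    intro x hx
    have := hw x hx
    simp only [GenSet, Set.mem_insert_iff, Set.mem_singleton_iff, gt_inv] at this
    rcases this with h | h | h | h
    · exact Or.inl h
    · exfalso
      have h0 := List.countP_eq_zero.mp hB x hx
      simp [h] at h0
    · exact Or.inr h
    · exact Or.inr h
  obtain ⟨j, k, hjk⟩ := shape v hform hT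
  rw [hjk, prod_mid] at hprod
  obtain ⟨hj, hk, -⟩ := el_inj hprod
  have hj' : j = n := by exact_mod_cast hj
  have hk' : k = n := by exact_mod_cast hk
  subst hj'; subst hk'
  exact hne (by rw [hjk, u_eq])

/-- For every n ≥ 1 the non-geodesic word w = t aⁿ t aⁿ t has a unique
strictly shorter representative: the geodesic u = aⁿ t aⁿ; every other word
over A representing ((n,n),1) has length at least 2n + 3 = |w|. -/
theorem unique_shorter_representative (n : ℕ) (hn : 1 ≤ n) :
    ¬ IsGeodesic ([gt] ++ apow n ++ [gt] ++ apow n ++ [gt]) ∧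
    Represents ([gt] ++ apow n ++ [gt] ++ apow n ++ [gt]) (el n n 1) ∧
    Represents (apow n ++ [gt] ++ apow n) (el n n 1) ∧
    IsGeodesic (apow n ++ [gt] ++ apow n) ∧
    (apow n ++ [gt] ++ apow n).length
      < ([gt] ++ apow n ++ [gt] ++ apow n ++ [gt]).length ∧
    ([gt] ++ apow n ++ [gt] ++ apow n ++ [gt]).length = 2 * n + 3 ∧
    ∀ v : List GG, Represents v (el n n 1) → v ≠ apow n ++ [gt] ++ apow n →
      2 * n + 3 ≤ v.length := by
  refine ⟨?_, ⟨isWord_w n, prod_w n⟩, ⟨isWord_u n, prod_u n⟩, ?_, ?_, len_w n, main_bound n⟩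
  · rintro ⟨-, hg⟩
    have := hg _ (isWord_u n) (by rw [prod_u, prod_w])
    rw [len_u, len_w] at this
    omega
  · refine ⟨isWord_u n, fun v hv hvp => ?_⟩
    rw [prod_u] at hvp
    obtain ⟨x, y, hp, hsum, hlen⟩ := key v hv
    rw [hvp] at hp
    obtain ⟨hx, hy, he⟩ := el_inj hp.symm
    subst hx; subst hy
    have hmod : cntT v % 2 = 1 := odd_of_cast he
    have hpm : (cntA v : ℤ) - (cntB v : ℤ) = 2 * n := by omega
    rw [len_u]
    omega
  · rw [len_u, len_w]
    omega
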